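/- Let α > 0. The function φ(x) = x·α / ((1 + (αx)²)·(π/2 − arctan(αx))) is strictly increasing on (0,∞). -/

import Mathlib

open Real

lemma arctan_lt_self_of_pos {x : ℝ} (hx : 0 < x) : Real.arctan x < x := by
  have h0 : 0 < Real.arctan x := by
    have := Real.arctan_strictMono hx
    simpa using this
  have h2 : Real.arctan x < π / 2 := Real.arctan_lt_pi_div_two x
  have := Real.lt_tan h0 h2
  rwa [Real.tan_arctan] at this

lemma key_ineq {t : ℝ} (ht : 0 < t) :
    0 < (1 - t ^ 2) * (π / 2 - Real.arctan t) + t := by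
  have hA : π / 2 - Real.arctan t = Real.arctan t⁻¹ :=
    (Real.arctan_inv_of_pos ht).symm
  rw [hA]
  set A := Real.arctan t⁻¹ with hAdef
  have hApos : 0 < A := by
    have := Real.arctan_strictMono (inv_pos.mpr ht)
    rw [Real.arctan_zero] at this; exact this
  have hAlt : A < t⁻¹ := arctan_lt_self_of_pos (inv_pos.mpr ht)
  have htA : t * A < 1 := by
    have := (mul_lt_mul_of_pos_left hAlt ht)
    rwa [mul_inv_cancel₀ ht.ne'] at this
  nlinarith [mul_pos ht hApos, mul_pos (mul_pos ht ht) hApos]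

/-- For the half-Cauchy model with rate `α > 0`, the function
`φ(x) = x·α / ((1 + (αx)²)·(π/2 − arctan(αx)))` is strictly increasing on
`(0,∞)`. -/
theorem halfCauchy_x_mul_hazard_strictMono (α : ℝ) (hα : 0 < α) :
    StrictMonoOn
      (fun x : ℝ => x * α / ((1 + (α * x) ^ 2) * (Real.pi / 2 - Real.arctan (α * x))))
      (Set.Ioi (0:ℝ)) := by
  have hderiv : ∀ x : ℝ, HasDerivAt
      (fun x : ℝ => x * α / ((1 + (α * x) ^ 2) * (Real.pi / 2 - Real.arctan (α * x))))
      ((α * ((1 + (α * x) ^ 2) * (π / 2 - Real.arctan (α * x))) -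
        x * α * (2 * (α * x) * α * (π / 2 - Real.arctan (α * x)) +
          (1 + (α * x) ^ 2) * (-(α / (1 + (α * x) ^ 2))))) /
        ((1 + (α * x) ^ 2) * (π / 2 - Real.arctan (α * x))) ^ 2) x := by
    intro x
    have hsq : (0:ℝ) < 1 + (α * x) ^ 2 := by positivity
    have hApos : (0:ℝ) < π / 2 - Real.arctan (α * x) :=
      sub_pos.mpr (Real.arctan_lt_pi_div_two _)
    have h1 : HasDerivAt (fun x : ℝ => α * x) α x := by
      simpa using (hasDerivAt_id x).const_mul α
    have h2 : HasDerivAt (fun x : ℝ => 1 + (α * x) ^ 2) (2 * (α * x) * α) x := by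
      have := (h1.pow 2).const_add 1
      simpa [mul_comm, mul_assoc, mul_left_comm] using this
    have h3 : HasDerivAt (fun x : ℝ => π / 2 - Real.arctan (α * x))
        (-(α / (1 + (α * x) ^ 2))) x := by
      have harc : HasDerivAt (fun x : ℝ => Real.arctan (α * x))
          (1 / (1 + (α * x) ^ 2) * α) x := (Real.hasDerivAt_arctan (α * x)).comp x h1
      have := (harc.const_sub (π / 2))
      simpa [div_eq_mul_inv, mul_comm] using this
    have hD : HasDerivAt (fun x : ℝ => (1 + (α * x) ^ 2) * (π / 2 - Real.arctan (α * x)))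
        (2 * (α * x) * α * (π / 2 - Real.arctan (α * x)) +
          (1 + (α * x) ^ 2) * (-(α / (1 + (α * x) ^ 2)))) x := h2.mul h3
    have hN : HasDerivAt (fun x : ℝ => x * α) α x := by
      simpa [mul_comm] using h1
    exact hN.div hD (by positivity)
  apply strictMonoOn_of_deriv_pos (convex_Ioi 0)
  · exact fun x hx => (hderiv x).differentiableAt.continuousAt.continuousWithinAt
  · intro x hx
    rw [interior_Ioi] at hx
    rw [(hderiv x).deriv]
    have hxpos : 0 < x := hx
    set t := α * x with htdef
    have ht : 0 < t := mul_pos hα hxpos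
    have hsq : (0:ℝ) < 1 + t ^ 2 := by positivity
    have hApos : (0:ℝ) < π / 2 - Real.arctan t :=
      sub_pos.mpr (Real.arctan_lt_pi_div_two _)
    have hkey := key_ineq ht
    have hnum : α * ((1 + t ^ 2) * (π / 2 - Real.arctan t)) -
        x * α * (2 * t * α * (π / 2 - Real.arctan t) +
          (1 + t ^ 2) * (-(α / (1 + t ^ 2)))) =
        α * ((1 - t ^ 2) * (π / 2 - Real.arctan t) + t) := by
      field_simp
      ring
    rw [hnum]
    positivity
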